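/- Let H be a real polynomial and k ≥ 0 an integer. Suppose g : (0, +∞) → ℝ is a differentiable function with g(s) > 0 and g'(s) > 0 for all s > 0, satisfying g(s)^k · g'(s) / H(g(s)) = 1/s for all s > 0 (in particular H(g(s)) ≠ 0). Let A = lim_{s→0⁺} g(s). Then H(x) > 0 for all x in the open interval (A, B) where B = lim_{s→+∞} g(s) ∈ (0, +∞], and H(A) = 0. -/

import Mathlib

open Filter Set Polynomial Real Topology

theorem stmt_5 (H : Polynomial ℝ) (k : ℕ) (g : ℝ → ℝ)
    (hdiff : ∀ s, 0 < s → DifferentiableAt ℝ g s)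
    (hpos : ∀ s, 0 < s → 0 < g s)
    (hderiv : ∀ s, 0 < s → 0 < deriv g s)
    (hH : ∀ s, 0 < s → H.eval (g s) ≠ 0)
    (hode : ∀ s, 0 < s → (g s)^k * deriv g s / H.eval (g s) = 1 / s)
    (A : ℝ) (hA : Filter.Tendsto g (nhdsWithin 0 (Set.Ioi 0)) (nhds A))
    (B : EReal)
    (hB : Filter.Tendsto (fun s => (g s : EReal)) Filter.atTop (nhds B)) :
    (∀ x : ℝ, A < x → (x : EReal) < B → 0 < H.eval x) ∧ H.eval A = 0 := by
  -- H(g s) > 0 on (0,∞)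
  have hgpos : ∀ s, 0 < s → 0 < H.eval (g s) := by
    intro s hs
    rcases (hH s hs).lt_or_gt with h | h
    · exfalso
      have hnum : 0 < (g s)^k * deriv g s := mul_pos (pow_pos (hpos s hs) k) (hderiv s hs)
      have h1 : (g s)^k * deriv g s / H.eval (g s) < 0 := div_neg_of_pos_of_neg hnum h
      have h2 : (0:ℝ) < 1 / s := by positivity
      rw [hode s hs] at h1; linarith
    · exact h
  -- g strictly monotone on Ioi 0
  have hcontOn : ContinuousOn g (Ioi 0) := fun s hs =>
    ((hdiff s hs).continuousAt).continuousWithinAt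
  have hmono : StrictMonoOn g (Ioi 0) := by
    apply strictMonoOn_of_deriv_pos (convex_Ioi 0) hcontOn
    intro x hx
    rw [interior_Ioi] at hx
    exact hderiv x hx
  -- A < g s for all s > 0
  have hltA : ∀ s, 0 < s → A < g s := by
    intro s hs
    have h1 : A ≤ g (s/2) := by
      apply le_of_tendsto hA
      filter_upwards [Ioo_mem_nhdsGT_of_mem (Set.mem_Ico.mpr ⟨le_rfl, by linarith⟩ : (0:ℝ) ∈ Ico 0 (s/2))] with t ht
      exact (hmono.le_iff_le ht.1 (Set.mem_Ioi.mpr (by linarith))).mpr ht.2.le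
    have h2 : g (s/2) < g s := hmono (Set.mem_Ioi.mpr (by linarith)) (Set.mem_Ioi.mpr hs) (by linarith)
    linarith
  -- g s < B for all s > 0
  have hltB : ∀ s, 0 < s → (g s : EReal) < B := by
    intro s hs
    have h2 : (g (s+1) : EReal) ≤ B := by
      apply ge_of_tendsto hB
      filter_upwards [eventually_ge_atTop (s+1)] with t ht
      exact EReal.coe_le_coe_iff.mpr ((hmono.le_iff_le (Set.mem_Ioi.mpr (by linarith))
        (Set.mem_Ioi.mpr (by linarith))).mpr ht)
    have h1 : (g s : EReal) < (g (s+1) : EReal) :=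
      EReal.coe_lt_coe_iff.mpr (hmono (Set.mem_Ioi.mpr hs) (Set.mem_Ioi.mpr (by linarith)) (by linarith))
    exact lt_of_lt_of_le h1 h2
  constructor
  · -- Part 1
    intro x hx hxB
    -- find t₁ with g t₁ < x
    have hev1 : ∀ᶠ t in nhdsWithin 0 (Set.Ioi 0), g t < x := hA.eventually (eventually_lt_nhds hx)
    have hev1' : ∀ᶠ t in nhdsWithin (0:ℝ) (Set.Ioi 0), t ∈ Set.Ioi (0:ℝ) := eventually_mem_nhdsWithin
    obtain ⟨t₁, h1, ht₁⟩ := (hev1.and hev1').exists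
    -- find t₂ ≥ t₁ with x < g t₂
    have hev2 : ∀ᶠ t in atTop, (x : EReal) < (g t : EReal) :=
      hB.eventually (eventually_gt_nhds hxB)
    obtain ⟨t₂, h2, ht₂⟩ := ((hev2.and (eventually_ge_atTop t₁)).and (eventually_gt_atTop 0)).exists
    obtain ⟨h2x, h12⟩ := h2
    have h2x' : x < g t₂ := EReal.coe_lt_coe_iff.mp h2x
    have : x ∈ g '' Icc t₁ t₂ := by
      apply intermediate_value_Icc h12 (hcontOn.mono ?_)
      · exact ⟨h1.le, h2x'.le⟩
      · intro y hy; exact lt_of_lt_of_le ht₁ hy.1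
    obtain ⟨s, hs, hgs⟩ := this
    have hs0 : 0 < s := lt_of_lt_of_le ht₁ hs.1
    rw [← hgs]
    exact hgpos s hs0
  · -- Part 2
    set c := H.eval A with hc
    have hHtendsto : Filter.Tendsto (fun s => H.eval (g s)) (nhdsWithin 0 (Set.Ioi 0)) (nhds c) :=
      (H.continuous.tendsto A).comp hA
    have hc0 : 0 ≤ c := by
      apply ge_of_tendsto hHtendsto
      filter_upwards [(eventually_mem_nhdsWithin : ∀ᶠ t in nhdsWithin (0:ℝ) (Set.Ioi 0), t ∈ Set.Ioi (0:ℝ))] with t ht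
      exact (hgpos t ht).le
    rcases hc0.eq_or_lt with h | hcpos
    · exact h.symm
    exfalso
    -- eventually H(g t) > c/2 near 0⁺
    have hev : ∀ᶠ t in nhdsWithin (0:ℝ) (Set.Ioi 0), c/2 < H.eval (g t) :=
      hHtendsto.eventually (eventually_gt_nhds (by linarith))
    obtain ⟨δ, hδpos, hδ⟩ := (nhdsGT_basis (0:ℝ)).eventually_iff.mp hev
    -- the auxiliary function
    set φ : ℝ → ℝ := fun s => g s ^ (k+1) / (k+1) - c/2 * Real.log s with hφ
    have hφderiv : ∀ s ∈ Ioo (0:ℝ) δ, HasDerivAt φ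
        (((k+1:ℕ) : ℝ) * g s ^ k * deriv g s / (k+1) - c/2 * s⁻¹) s := by
      intro s hs
      have h1 : HasDerivAt (fun t => g t ^ (k+1)) (((k+1:ℕ):ℝ) * g s ^ k * deriv g s) s := by
        have := ((hdiff s hs.1).hasDerivAt).pow (k+1)
        simpa [Pi.pow_def] using this
      exact (h1.div_const ((k:ℝ)+1)).sub ((Real.hasDerivAt_log hs.1.ne').const_mul (c/2))
    have hφmono : StrictMonoOn φ (Ioo 0 δ) := by
      apply strictMonoOn_of_deriv_pos (convex_Ioo 0 δ)
      · intro s hs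
        exact ((hφderiv s hs).differentiableAt.continuousAt).continuousWithinAt
      · intro s hs
        rw [interior_Ioo] at hs
        rw [(hφderiv s hs).deriv]
        have hode' : g s ^ k * deriv g s = H.eval (g s) / s := by
          have h := hode s hs.1
          rw [div_eq_div_iff (hH s hs.1) hs.1.ne'] at h
          rw [eq_div_iff hs.1.ne']
          linarith
        have hHb : c/2 < H.eval (g s) := hδ ⟨hs.1, hs.2⟩
        have hsinv : 0 < s⁻¹ := inv_pos.mpr hs.1
        have heq : ((k+1:ℕ):ℝ) * g s ^ k * deriv g s / ((k:ℝ)+1) = g s ^ k * deriv g s := by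
          have hk : ((k:ℝ)+1) ≠ 0 := by positivity
          push_cast
          field_simp
        rw [heq, hode', div_eq_mul_inv, sub_pos]
        exact mul_lt_mul_of_pos_right hHb hsinv
    -- contradiction
    set t₀ : ℝ := δ/2 with ht₀
    have ht₀mem : t₀ ∈ Ioo (0:ℝ) δ := ⟨by positivity, by simp [ht₀]; linarith⟩
    set M : ℝ := φ t₀ with hM
    set s : ℝ := min (t₀/2) (Real.exp (-(2 * M / c + 1))) with hsdef
    have hspos : 0 < s := lt_min (by positivity) (Real.exp_pos _)
    have hsmem : s ∈ Ioo (0:ℝ) δ := ⟨hspos, lt_of_le_of_lt (min_le_left _ _) (by linarith [ht₀mem.1, ht₀mem.2])⟩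
    have hst : s < t₀ := lt_of_le_of_lt (min_le_left _ _) (by linarith [ht₀mem.1])
    have hlog : Real.log s ≤ -(2 * M / c + 1) := by
      calc Real.log s ≤ Real.log (Real.exp (-(2 * M / c + 1))) :=
            Real.log_le_log hspos (min_le_right _ _)
        _ = -(2 * M / c + 1) := Real.log_exp _
    have hφs : φ s < M := hφmono hsmem ht₀mem hst
    have hGpos : 0 < g s ^ (k+1) / (k+1) := by
      have := hpos s hspos
      positivity
    have hkey : M < φ s := by
      have h1 : -(c/2 * Real.log s) ≥ c/2 * (2 * M / c + 1) := by nlinarith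
      have h2 : c/2 * (2 * M / c + 1) = M + c/2 := by field_simp
      have : φ s = g s ^ (k+1) / (k+1) - c/2 * Real.log s := rfl
      rw [this]
      nlinarith
    linarith
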